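/- Let n ∈ (1,∞) and d ≥ 2 an integer, and let C_n := max_{(z,u)∈[0,4]×[0,1]} c_n(z,u), where c_n(z,u) := z(4−z)[(1 − zu + zu²)^{n/2} − (1−u)^n]² / ( 2u² [u^{2n−2} + (1−u)^{2n−2}] ) for u ∈ (0,1] and c_n(z,0) := n² z (4−z)(2−z)²/8. Then for all p, q ∈ R^d: |p ∧ q|² (|p+q|^n − |q|^n)² ≤ (C_n/2) |p|⁴ |q|² [ |p|^{2n−2} + |q|^{2n−2} ]. -/

import Mathlib

noncomputable section

/-- The function `c_n` of the paper on `[0,4] × [0,1]` (first coordinate `z`,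
second coordinate `u`), defined piecewise at `u = 0`. -/
def cFun (n : ℝ) (zu : ℝ × ℝ) : ℝ :=
  if zu.2 = 0 then n ^ 2 * zu.1 * (4 - zu.1) * (2 - zu.1) ^ 2 / 8
  else zu.1 * (4 - zu.1) *
      ((1 - zu.1 * zu.2 + zu.1 * zu.2 ^ 2) ^ (n / 2) - (1 - zu.2) ^ n) ^ 2 /
    (2 * zu.2 ^ 2 * (zu.2 ^ (2 * n - 2) + (1 - zu.2) ^ (2 * n - 2)))

/-- with `C_n := max_{[0,4]×[0,1]} c_n`, for all `p, q ∈ ℝ^d`: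
`|p ∧ q|² (|p+q|^n − |q|^n)² ≤ (C_n/2) |p|⁴ |q|² [|p|^{2n−2} + |q|^{2n−2}]`,
where `|p ∧ q|² = |p|²|q|² − (p·q)²`. -/
theorem stmt8 (n : ℝ) (hn : 1 < n) (d : ℕ) (hd : 2 ≤ d) (C : ℝ)
    (hC : IsGreatest (cFun n '' (Set.Icc (0 : ℝ) 4 ×ˢ Set.Icc (0 : ℝ) 1)) C)
    (p q : Fin d → ℝ) :
    ((∑ i, p i ^ 2) * (∑ i, q i ^ 2) - (∑ i, p i * q i) ^ 2) *
        (Real.sqrt (∑ i, (p i + q i) ^ 2) ^ n - Real.sqrt (∑ i, q i ^ 2) ^ n) ^ 2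
      ≤ C / 2 * (∑ i, p i ^ 2) ^ 2 * (∑ i, q i ^ 2) *
        (Real.sqrt (∑ i, p i ^ 2) ^ (2 * n - 2) + Real.sqrt (∑ i, q i ^ 2) ^ (2 * n - 2)) := by
  set A := ∑ i, p i ^ 2 with hAdef
  set B := ∑ i, q i ^ 2 with hBdef
  set S := ∑ i, (p i + q i) ^ 2 with hSdef
  set s := ∑ i, p i * q i with hsdef
  have hA0 : 0 ≤ A := Finset.sum_nonneg fun i _ => sq_nonneg _
  have hB0 : 0 ≤ B := Finset.sum_nonneg fun i _ => sq_nonneg _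
  have hS0 : 0 ≤ S := Finset.sum_nonneg fun i _ => sq_nonneg _
  have hCS : s ^ 2 ≤ A * B := by
    simpa [hAdef, hBdef, hsdef] using Finset.sum_mul_sq_le_sq_mul_sq Finset.univ p q
  have hSid : S = A + 2 * s + B := by
    simp only [hSdef, hAdef, hBdef, hsdef, Finset.mul_sum, ← Finset.sum_add_distrib]
    exact Finset.sum_congr rfl fun i _ => by ring
  clear_value A B S s
  rcases eq_or_lt_of_le hA0 with hA' | hApos
  · have hs0 : s = 0 := by nlinarith [sq_nonneg s]
    rw [← hA', hs0]
    simp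
  rcases eq_or_lt_of_le hB0 with hB' | hBpos
  · have hs0 : s = 0 := by nlinarith [sq_nonneg s]
    rw [← hB', hs0]
    simp
  set a := Real.sqrt A with hadef
  set b := Real.sqrt B with hbdef
  have ha : 0 < a := Real.sqrt_pos.2 hApos
  have hb : 0 < b := Real.sqrt_pos.2 hBpos
  have ha2 : a ^ 2 = A := Real.sq_sqrt hA0
  have hb2 : b ^ 2 = B := Real.sq_sqrt hB0
  clear_value a b
  have hab : 0 < a + b := by linarith
  have hane : a ≠ 0 := ha.ne'
  have hbne : b ≠ 0 := hb.ne'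
  have habne : a + b ≠ 0 := hab.ne'
  have hsab : s ^ 2 ≤ a ^ 2 * b ^ 2 := by rw [ha2, hb2]; exact hCS
  have hslb : -(a * b) ≤ s := by nlinarith [mul_pos ha hb, sq_nonneg (s + a * b)]
  have hsub : s ≤ a * b := by nlinarith [mul_pos ha hb, sq_nonneg (s - a * b)]
  set u := a / (a + b) with hudef
  set z := 2 - 2 * s / (a * b) with hzdef
  clear_value u z
  have hu0 : 0 < u := by rw [hudef]; exact div_pos ha hab
  have hu1 : u ≤ 1 := by rw [hudef, div_le_one hab]; linarith
  have hz0 : 0 ≤ z := by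
    rw [hzdef, sub_nonneg, div_le_iff₀ (by positivity : (0:ℝ) < a * b)]
    linarith
  have hz4 : z ≤ 4 := by
    rw [hzdef]
    have h : -2 ≤ 2 * s / (a * b) := by
      rw [le_div_iff₀ (by positivity : (0:ℝ) < a * b)]; linarith
    linarith
  have hmem : (z, u) ∈ Set.Icc (0:ℝ) 4 ×ˢ Set.Icc (0:ℝ) 1 :=
    ⟨⟨hz0, hz4⟩, ⟨hu0.le, hu1⟩⟩
  have key : cFun n (z, u) ≤ C := hC.2 (Set.mem_image_of_mem _ hmem)
  have hP : 0 < (a + b) ^ n := Real.rpow_pos_of_pos hab n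
  have hPne : (a + b) ^ n ≠ 0 := hP.ne'
  have hKa : 0 < a ^ (2 * n - 2) := Real.rpow_pos_of_pos ha _
  have hKb : 0 < b ^ (2 * n - 2) := Real.rpow_pos_of_pos hb _
  have hKne : a ^ (2 * n - 2) + b ^ (2 * n - 2) ≠ 0 := by positivity
  -- the piecewise value
  have keyval : cFun n (z, u)
      = z * (4 - z) * ((1 - z * u + z * u ^ 2) ^ (n / 2) - (1 - u) ^ n) ^ 2 /
        (2 * u ^ 2 * (u ^ (2 * n - 2) + (1 - u) ^ (2 * n - 2))) := by
    simp only [cFun]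
    rw [if_neg]
    exact hu0.ne'
  have h1u : 1 - u = b / (a + b) := by
    rw [hudef]; field_simp; ring
  have h1 : 1 - z * u + z * u ^ 2 = S / (a + b) ^ 2 := by
    have hS' : S = a ^ 2 + 2 * s + b ^ 2 := by rw [hSid, ha2, hb2]
    rw [hzdef, hudef, hS']
    field_simp
    ring
  have hX : (S / (a + b) ^ 2) ^ (n / 2) = Real.sqrt S ^ n / (a + b) ^ n := by
    rw [Real.div_rpow hS0 (by positivity), Real.sqrt_eq_rpow,
      ← Real.rpow_natCast (a + b) 2, ← Real.rpow_mul hab.le, ← Real.rpow_mul hS0,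
      show ((2:ℕ):ℝ) * (n / 2) = n by push_cast; ring,
      show (1/2 : ℝ) * n = n / 2 by ring]
  have hY : (b / (a + b)) ^ n = b ^ n / (a + b) ^ n :=
    Real.div_rpow hb.le hab.le n
  have hKa' : u ^ (2 * n - 2) = a ^ (2 * n - 2) / (a + b) ^ (2 * n - 2) := by
    rw [hudef]; exact Real.div_rpow ha.le hab.le _
  have hKb' : (b / (a + b)) ^ (2 * n - 2) = b ^ (2 * n - 2) / (a + b) ^ (2 * n - 2) :=
    Real.div_rpow hb.le hab.le _
  have hu2 : u ^ 2 = a ^ 2 / (a + b) ^ 2 := by rw [hudef, div_pow]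
  have hQ : (a + b) ^ (2 * n - 2) = ((a + b) ^ n) ^ 2 / (a + b) ^ 2 := by
    rw [eq_div_iff (by positivity : ((a + b):ℝ) ^ 2 ≠ 0),
      ← Real.rpow_natCast (a + b) 2, ← Real.rpow_natCast ((a + b) ^ n) 2,
      ← Real.rpow_add hab, ← Real.rpow_mul hab.le]
    congr 1
    push_cast
    ring
  have hcfun : cFun n (z, u)
      = 4 * (a ^ 2 * b ^ 2 - s ^ 2) * (Real.sqrt S ^ n - b ^ n) ^ 2 /
        (a ^ 2 * b ^ 2 * (2 * a ^ 2 * (a ^ (2 * n - 2) + b ^ (2 * n - 2)))) := by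
    rw [keyval, h1, h1u, hX, hY, hKa', hKb', hu2, hQ, hzdef]
    field_simp
    ring
  rw [hcfun, div_le_iff₀ (by positivity)] at key
  rw [← ha2, ← hb2]
  linarith [key]
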